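/- Let G be a finite p-group with |G : G'| = p^2 and suppose G' ≠ γ₃(G). Then γ₃(G) is the unique normal subgroup of G of index p^3. -/

import Mathlib

open Subgroup
open scoped commutatorElement

private lemma comm_bot {R : Type*} [Group R] (h : ∀ a b : R, a * b = b * a) :
    commutator R = ⊥ := by
  rw [_root_.commutator_def, Subgroup.commutator_eq_bot_iff_le_centralizer, Subgroup.coe_top,
    Subgroup.centralizer_univ]
  intro x _
  exact Subgroup.mem_center_iff.mpr fun g => h g x

/-- A finite group whose commutator subgroup is central, has index `p^2`, and is nontrivial
has cardinality `p^3`. -/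
private lemma aux_card (p : ℕ) [Fact p.Prime] (R : Type*) [Group R] [Finite R]
    (hcent : commutator R ≤ Subgroup.center R)
    (hidx : (commutator R).index = p ^ 2)
    (hnb : commutator R ≠ ⊥) :
    Nat.card R = p ^ 3 := by
  have hp : p.Prime := Fact.out
  -- commutators are central
  have hcc : ∀ x y : R, ⁅x, y⁆ ∈ Subgroup.center R := fun x y =>
    hcent (Subgroup.commutator_mem_commutator (mem_top x) (mem_top y))
  have hcomm : ∀ x y w : R, Commute ⁅x, y⁆ w := fun x y w =>
    (Subgroup.mem_center_iff.mp (hcc x y) w).symm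
  -- bilinearity of the commutator
  have hmul : ∀ x y z : R, ⁅x * y, z⁆ = ⁅x, z⁆ * ⁅y, z⁆ := by
    intro x y z
    have e1 : ⁅x * y, z⁆ = x * ⁅y, z⁆ * x⁻¹ * ⁅x, z⁆ := by
      simp only [commutatorElement_def]
      group
    rw [e1, (hcomm y z x).eq.symm, mul_assoc ⁅y, z⁆ x x⁻¹, mul_inv_cancel, mul_one,
      (hcomm y z ⁅x, z⁆).eq]
  have hmulr : ∀ z x y : R, ⁅z, x * y⁆ = ⁅z, x⁆ * ⁅z, y⁆ := by
    intro z x y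
    have e1 : ⁅z, x * y⁆ = ⁅x * y, z⁆⁻¹ := (commutatorElement_inv _ _).symm
    rw [e1, hmul, mul_inv_rev, commutatorElement_inv, commutatorElement_inv]
    exact (hcomm z y ⁅z, x⁆).eq
  have hzpow : ∀ (z x : R) (n : ℤ), ⁅x ^ n, z⁆ = ⁅x, z⁆ ^ n := fun z x n =>
    (MonoidHom.mk' (fun w => ⁅w, z⁆) (fun a b => hmul a b z)).map_zpow x n
  have hzpowr : ∀ (z x : R) (n : ℤ), ⁅z, x ^ n⁆ = ⁅z, x⁆ ^ n := fun z x n =>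
    (MonoidHom.mk' (fun w => ⁅z, w⁆) (fun a b => hmulr z a b)).map_zpow x n
  -- the abelianization
  have hker : (Abelianization.of : R →* Abelianization R).ker = commutator R := by
    ext x
    exact QuotientGroup.eq_one_iff x
  have hcardA : Nat.card (Abelianization R) = p ^ 2 := by
    rw [← hidx]
    exact (Subgroup.index_eq_card _).symm
  haveI : Nontrivial (Abelianization R) := by
    apply (Finite.one_lt_card_iff_nontrivial).mp
    rw [hcardA]
    exact Nat.one_lt_pow (by norm_num) hp.one_lt
  have hnc : ¬ IsCyclic (Abelianization R) := by
    intro h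
    exact hnb (comm_bot (commutative_of_cyclic_center_quotient Abelianization.of
      (hker.le.trans hcent)))
  -- every element of the abelianization has order dividing p
  have hexp : ∀ x : Abelianization R, x ^ p = 1 := by
    intro x
    have h1 : orderOf x ∣ p ^ 2 := hcardA ▸ orderOf_dvd_natCard x
    obtain ⟨k, hk2, hk⟩ := (Nat.dvd_prime_pow hp).mp h1
    have hdvd : orderOf x ∣ p := by
      rcases Nat.lt_or_ge k 2 with h | h
      · rw [hk]
        calc p ^ k ∣ p ^ 1 := pow_dvd_pow p (by omega)
          _ = p := pow_one p
      · exfalso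
        exact hnc (isCyclic_of_orderOf_eq_card x
          (by rw [hk, le_antisymm hk2 h, hcardA]))
    exact orderOf_dvd_iff_pow_eq_one.mp hdvd
  -- two generators of the abelianization
  obtain ⟨abar, habar⟩ := exists_ne (1 : Abelianization R)
  have horda : orderOf abar = p := orderOf_eq_prime (hexp abar) habar
  obtain ⟨bbar, hbbar⟩ : ∃ b : Abelianization R, b ∉ Subgroup.zpowers abar := by
    by_contra h
    push_neg at h
    exact hnc ⟨⟨abar, fun x => h x⟩⟩
  have hcl : Subgroup.closure ({abar, bbar} : Set (Abelianization R)) = ⊤ := by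
    set H := Subgroup.closure ({abar, bbar} : Set (Abelianization R)) with hH
    have hle : Subgroup.zpowers abar ≤ H :=
      Subgroup.zpowers_le.mpr (Subgroup.subset_closure (by simp))
    have hbH : bbar ∈ H := Subgroup.subset_closure (by simp)
    have hcard : Nat.card H ∣ p ^ 2 := hcardA ▸ Subgroup.card_subgroup_dvd_card H
    obtain ⟨k, hk2, hk⟩ := (Nat.dvd_prime_pow hp).mp hcard
    have hpk : p ∣ Nat.card H := by
      have h1 := Subgroup.card_dvd_of_le hle
      rwa [Nat.card_zpowers, horda] at h1
    interval_cases k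
    · rw [pow_zero] at hk
      rw [hk] at hpk
      exact absurd (Nat.dvd_one.mp hpk) hp.ne_one
    · exfalso
      have heq : Subgroup.zpowers abar = H := by
        apply Subgroup.eq_of_le_of_card_ge hle
        rw [hk, pow_one, Nat.card_zpowers, horda]
      exact hbbar (heq ▸ hbH)
    · exact Subgroup.eq_top_of_card_eq H (by rw [hk, hcardA])
  obtain ⟨a, ha⟩ : ∃ a : R, Abelianization.of a = abar := Quotient.exists_rep abar
  obtain ⟨b, hb⟩ : ∃ b : R, Abelianization.of b = bbar := Quotient.exists_rep bbar
  set c := ⁅a, b⁆ with hc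
  -- every commutator is a power of c
  have hdecomp : ∀ x : R, ∃ (m n : ℤ) (w : R), w ∈ Subgroup.center R ∧ x = a ^ m * b ^ n * w := by
    intro x
    have hx : Abelianization.of x ∈ Subgroup.closure ({abar, bbar} : Set (Abelianization R)) := by
      rw [hcl]; exact mem_top _
    obtain ⟨m, n, hmn⟩ := Subgroup.mem_closure_pair.mp hx
    refine ⟨m, n, (a ^ m * b ^ n)⁻¹ * x, ?_, by group⟩
    apply hcent
    rw [← hker]
    show Abelianization.of ((a ^ m * b ^ n)⁻¹ * x) = 1
    rw [map_mul, map_inv, map_mul, map_zpow, map_zpow, ha, hb, hmn]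
    group
  have hmem : ∀ x y : R, ⁅x, y⁆ ∈ Subgroup.zpowers c := by
    intro x y
    obtain ⟨m, n, w, hw, rfl⟩ := hdecomp x
    obtain ⟨r, s, v, hv, rfl⟩ := hdecomp y
    have hwy : ∀ u : R, ⁅w, u⁆ = 1 := fun u =>
      commutatorElement_eq_one_iff_commute.mpr ((Subgroup.mem_center_iff.mp hw u).symm)
    have hvy : ∀ u : R, ⁅u, v⁆ = 1 := fun u =>
      commutatorElement_eq_one_iff_commute.mpr (Subgroup.mem_center_iff.mp hv u)
    rw [hmul, hwy, mul_one, hmulr, hvy, mul_one, hmul, hmulr, hmulr]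
    have h1 : ⁅a ^ m, a ^ r⁆ = 1 :=
      commutatorElement_eq_one_iff_commute.mpr ((Commute.refl a).zpow_zpow m r)
    have h4 : ⁅b ^ n, b ^ s⁆ = 1 :=
      commutatorElement_eq_one_iff_commute.mpr ((Commute.refl b).zpow_zpow n s)
    have h2 : ⁅a ^ m, b ^ s⁆ ∈ Subgroup.zpowers c := by
      rw [hzpow, hzpowr]
      exact Subgroup.zpow_mem _ (Subgroup.zpow_mem _ (Subgroup.mem_zpowers c) s) m
    have h3 : ⁅b ^ n, a ^ r⁆ ∈ Subgroup.zpowers c := by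
      rw [hzpow, hzpowr]
      have : ⁅b, a⁆ ∈ Subgroup.zpowers c :=
        (commutatorElement_inv a b) ▸ Subgroup.inv_mem _ (Subgroup.mem_zpowers c)
      exact Subgroup.zpow_mem _ (Subgroup.zpow_mem _ this r) n
    rw [h1, h4, one_mul]
    exact Subgroup.mul_mem _ h2 (Subgroup.mul_mem _ h3 (Subgroup.one_mem _))
  have hCle : commutator R ≤ Subgroup.zpowers c := by
    rw [_root_.commutator_def]
    exact Subgroup.commutator_le.mpr fun g _ h _ => hmem g h
  have hcp : c ^ p = 1 := by
    have hap : a ^ (p : ℤ) ∈ Subgroup.center R := by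
      apply hcent
      rw [← hker]
      show Abelianization.of (a ^ (p : ℤ)) = 1
      rw [map_zpow, ha, zpow_natCast, hexp abar]
    have h1 : ⁅a ^ (p : ℤ), b⁆ = 1 :=
      commutatorElement_eq_one_iff_commute.mpr ((Subgroup.mem_center_iff.mp hap b).symm)
    have h2 : c ^ (p : ℤ) = 1 := by rw [← hzpow b a, h1]
    rwa [zpow_natCast] at h2
  have hdvd : Nat.card (commutator R) ∣ p := by
    have h1 := Subgroup.card_dvd_of_le hCle
    rw [Nat.card_zpowers] at h1
    exact h1.trans (orderOf_dvd_of_pow_eq_one hcp)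
  have hCcard : Nat.card (commutator R) = p := by
    rcases hp.eq_one_or_self_of_dvd _ hdvd with h | h
    · exact absurd (Subgroup.card_eq_one.mp h) hnb
    · exact h
  calc Nat.card R = Nat.card (commutator R) * (commutator R).index :=
        (Subgroup.card_mul_index _).symm
    _ = p * p ^ 2 := by rw [hCcard, hidx]
    _ = p ^ 3 := by ring

/-- Let `G` be a finite `p`-group with `|G : G'| = p^2` and `G' ≠ γ₃(G)`. Then `γ₃(G)` is
the unique normal subgroup of `G` of index `p^3`. -/
theorem stmt2 (p : ℕ) [Fact p.Prime] (G : Type*) [Group G] [Finite G]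
    (hG : IsPGroup p G) (hidx : (commutator G).index = p ^ 2)
    (hne : commutator G ≠ (⊤ : Subgroup G).lowerCentralSeries 2) :
    ∀ N : Subgroup G, N.Normal → N.index = p ^ 3 → N = (⊤ : Subgroup G).lowerCentralSeries 2 := by
  intro N hN hNidx
  have hp : p.Prime := Fact.out
  have hγle : (⊤ : Subgroup G).lowerCentralSeries 2 ≤ commutator G := by
    have h := (⊤ : Subgroup G).lowerCentralSeries_antitone (show 1 ≤ 2 by norm_num)
    rwa [Subgroup.top_lowerCentralSeries_one] at h
  have hγ2 : (⊤ : Subgroup G).lowerCentralSeries 2 = ⁅commutator G, (⊤ : Subgroup G)⁆ := rfl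
  -- Part 1 : γ₃(G) ≤ N
  have hπs : Function.Surjective (QuotientGroup.mk' N) := QuotientGroup.mk'_surjective N
  have hQcard : Nat.card (G ⧸ N) = p ^ 3 := by rw [← Subgroup.index_eq_card, hNidx]
  have hQcomm : commutator (G ⧸ N) = Subgroup.map (QuotientGroup.mk' N) (commutator G) := by
    rw [_root_.commutator_def, _root_.commutator_def, Subgroup.map_commutator,
      Subgroup.map_top_of_surjective _ hπs]
  have hQnb : commutator (G ⧸ N) ≠ ⊥ := by
    intro h
    rw [hQcomm, Subgroup.map_eq_bot_iff, QuotientGroup.ker_mk'] at h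
    have h2 := Subgroup.index_dvd_of_le h
    rw [hNidx, hidx] at h2
    exact absurd ((Nat.pow_dvd_pow_iff_le_right hp.one_lt).mp h2) (by norm_num)
  haveI : Nontrivial (G ⧸ N) := by
    apply Finite.one_lt_card_iff_nontrivial.mp
    rw [hQcard]
    exact Nat.one_lt_pow (by norm_num) hp.one_lt
  have hQp : IsPGroup p (G ⧸ N) := hG.to_quotient N
  haveI hZnt : Nontrivial (Subgroup.center (G ⧸ N)) := IsPGroup.center_nontrivial hQp
  have hnc : ¬ IsCyclic ((G ⧸ N) ⧸ Subgroup.center (G ⧸ N)) := by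
    intro h
    exact hQnb (comm_bot (commutative_of_cyclic_center_quotient
      (QuotientGroup.mk' (Subgroup.center (G ⧸ N)))
      (by rw [QuotientGroup.ker_mk'])))
  have hZd : Nat.card (Subgroup.center (G ⧸ N)) ∣ p ^ 3 :=
    hQcard ▸ Subgroup.card_subgroup_dvd_card _
  obtain ⟨k, hk3, hkcard⟩ := (Nat.dvd_prime_pow hp).mp hZd
  have hk0 : k ≠ 0 := by
    intro h
    rw [h, pow_zero] at hkcard
    exact (Finite.one_lt_card_iff_nontrivial.mpr hZnt).ne' hkcard
  have hZmul : Nat.card (Subgroup.center (G ⧸ N)) * (Subgroup.center (G ⧸ N)).index = p ^ 3 := by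
    rw [Subgroup.card_mul_index, hQcard]
  have hZidx : (Subgroup.center (G ⧸ N)).index = p ^ (3 - k) := by
    apply Nat.eq_of_mul_eq_mul_left (show 0 < p ^ k from pow_pos hp.pos k)
    rw [← hkcard, hZmul, hkcard, ← pow_add]
    congr 1
    omega
  have hZidx2 : (Subgroup.center (G ⧸ N)).index = p ^ 2 := by
    interval_cases k
    · exact absurd rfl hk0
    · rw [hZidx]
    · exfalso
      apply hnc
      apply isCyclic_of_prime_card (p := p)
      rw [← Subgroup.index_eq_card, hZidx]
      norm_num
    · exfalso
      apply hnc
      have h1 : Nat.card ((G ⧸ N) ⧸ Subgroup.center (G ⧸ N)) = 1 := by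
        rw [← Subgroup.index_eq_card, hZidx]
        norm_num
      haveI := (Nat.card_eq_one_iff_unique.mp h1).1
      infer_instance
  have hcommle : commutator (G ⧸ N) ≤ Subgroup.center (G ⧸ N) := by
    have hcsq : ∀ a b : (G ⧸ N) ⧸ Subgroup.center (G ⧸ N), a * b = b * a :=
      IsPGroup.commutative_of_card_eq_prime_sq (by rw [← Subgroup.index_eq_card, hZidx2])
    rw [_root_.commutator_def]
    refine Subgroup.commutator_le.mpr fun g _ h _ => ?_
    have h1 : QuotientGroup.mk' (Subgroup.center (G ⧸ N)) ⁅g, h⁆ = 1 := by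
      rw [map_commutatorElement]
      exact commutatorElement_eq_one_iff_commute.mpr (hcsq _ _)
    rw [← QuotientGroup.ker_mk' (Subgroup.center (G ⧸ N))]
    exact h1
  have hγQ : (⊤ : Subgroup (G ⧸ N)).lowerCentralSeries 2 = ⊥ := by
    have h1 : (⊤ : Subgroup (G ⧸ N)).lowerCentralSeries 2 = ⁅commutator (G ⧸ N), (⊤ : Subgroup (G ⧸ N))⁆ := rfl
    have h2 : ⁅Subgroup.center (G ⧸ N), (⊤ : Subgroup (G ⧸ N))⁆ = ⊥ :=
      Subgroup.commutator_eq_bot_iff_le_centralizer.mpr (Subgroup.center_le_centralizer _)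
    rw [h1, ← le_bot_iff, ← h2]
    exact Subgroup.commutator_mono hcommle le_rfl
  have hγN : (⊤ : Subgroup G).lowerCentralSeries 2 ≤ N := by
    intro x hx
    have h1 : (QuotientGroup.mk' N) x ∈ Subgroup.map (QuotientGroup.mk' N)
        ((⊤ : Subgroup G).lowerCentralSeries 2) := Subgroup.mem_map_of_mem _ hx
    have h2 := Subgroup.lowerCentralSeries.map (QuotientGroup.mk' N) 2 h1
    rw [hγQ, Subgroup.mem_bot] at h2
    rwa [← QuotientGroup.ker_mk' N, MonoidHom.mem_ker]
  -- Part 2 : the index of γ₃(G) is p^3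
  have hρs : Function.Surjective (QuotientGroup.mk' ((⊤ : Subgroup G).lowerCentralSeries 2)) :=
    QuotientGroup.mk'_surjective _
  have hRcomm : commutator (G ⧸ (⊤ : Subgroup G).lowerCentralSeries 2) =
      Subgroup.map (QuotientGroup.mk' ((⊤ : Subgroup G).lowerCentralSeries 2)) (commutator G) := by
    rw [_root_.commutator_def, _root_.commutator_def, Subgroup.map_commutator,
      Subgroup.map_top_of_surjective _ hρs]
  have hRcent : commutator (G ⧸ (⊤ : Subgroup G).lowerCentralSeries 2) ≤
      Subgroup.center (G ⧸ (⊤ : Subgroup G).lowerCentralSeries 2) := by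
    have h1 : ⁅commutator (G ⧸ (⊤ : Subgroup G).lowerCentralSeries 2),
        (⊤ : Subgroup (G ⧸ (⊤ : Subgroup G).lowerCentralSeries 2))⁆ = ⊥ := by
      rw [hRcomm, ← Subgroup.map_top_of_surjective _ hρs, ← Subgroup.map_commutator,
        Subgroup.map_eq_bot_iff, QuotientGroup.ker_mk', ← hγ2]
    have h2 := Subgroup.commutator_eq_bot_iff_le_centralizer.mp h1
    rwa [Subgroup.coe_top, Subgroup.centralizer_univ] at h2
  have hRidx : (commutator (G ⧸ (⊤ : Subgroup G).lowerCentralSeries 2)).index = p ^ 2 := by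
    rw [hRcomm, Subgroup.index_map, QuotientGroup.ker_mk', sup_of_le_left hγle,
      MonoidHom.range_eq_top.mpr hρs, Subgroup.index_top, mul_one, hidx]
  have hRnb : commutator (G ⧸ (⊤ : Subgroup G).lowerCentralSeries 2) ≠ ⊥ := by
    intro h
    rw [hRcomm, Subgroup.map_eq_bot_iff, QuotientGroup.ker_mk'] at h
    exact hne (le_antisymm h hγle)
  have hγidx : ((⊤ : Subgroup G).lowerCentralSeries 2).index = p ^ 3 := by
    rw [Subgroup.index_eq_card]
    exact aux_card p _ hRcent hRidx hRnb
  -- Part 3 : conclude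
  have hrel := Subgroup.relIndex_mul_index hγN
  rw [hNidx, hγidx] at hrel
  have hrel1 : ((⊤ : Subgroup G).lowerCentralSeries 2).relIndex N = 1 := by
    apply Nat.eq_of_mul_eq_mul_right (show 0 < p ^ 3 from pow_pos hp.pos 3)
    rw [hrel, one_mul]
  exact le_antisymm (Subgroup.relIndex_eq_one.mp hrel1) hγN
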